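/- Let d_r ≥ 2 be a real number, let w > 0 satisfy w·e^w = 1.27, and let u > 0 satisfy u·e^u = (d_r − 1)/(2(d_r + 1)). Then the function f(z) = (z·d_r)^{d_r}·((d_r+1)·e^{w} − (d_r−1)·z) satisfies f(z) ≤ f(1/(2u)) for all z ∈ [0, 1/(2u)]; i.e., the maximum of f on [0, 1/(2u)] is attained at z = 1/(2u). -/

import Mathlib

open Real

private lemma expw_ge (w : ℝ) (hw : 0 < w) (hweq : w * Real.exp w = 1.27) :
    (1.8 : ℝ) ≤ Real.exp w := by
  by_contra h
  push_neg at h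
  have hE : 0 < Real.exp w := Real.exp_pos w
  have hw2 : 1.27 / 1.8 < w := by
    rw [div_lt_iff₀ (by norm_num)]
    nlinarith
  have hsq : (1 + w/2)^2 ≤ Real.exp w := by
    have h1 : w/2 + 1 ≤ Real.exp (w/2) := Real.add_one_le_exp _
    have h2 : Real.exp (w/2) * Real.exp (w/2) = Real.exp w := by
      rw [← Real.exp_add]; ring_nf
    nlinarith [Real.exp_pos (w/2)]
  nlinarith

private lemma expu_le (u : ℝ) (hu : 0 < u) (hu1 : u ≤ 1/2) :
    Real.exp u ≤ 1 + u + u^2/2 + 2*u^3/9 := by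
  have h := Real.exp_bound (x := u) (by rw [abs_of_pos hu]; linarith) (n := 3) (by norm_num)
  have hs : ∑ m ∈ Finset.range 3, u ^ m / (Nat.factorial m : ℝ) = 1 + u + u^2/2 := by
    rw [Finset.sum_range_succ, Finset.sum_range_succ, Finset.sum_range_succ,
      Finset.sum_range_zero]
    norm_num [Nat.factorial]
  rw [hs, abs_of_pos hu] at h
  have h2 := (abs_le.1 h).2
  have hfac : (Nat.factorial 3 : ℝ) = 6 := by norm_num [Nat.factorial]
  rw [hfac] at h2
  push_cast at h2
  nlinarith

private lemma key (dr : ℝ) (hdr : 2 ≤ dr)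
    (w : ℝ) (hw : 0 < w) (hweq : w * Real.exp w = 1.27)
    (u : ℝ) (hu : 0 < u) (hueq : u * Real.exp u = (dr - 1) / (2 * (dr + 1))) :
    (dr + 1) * Real.exp u ≤ dr * Real.exp w := by
  set t : ℝ := (dr - 1) / (2 * (dr + 1)) with ht
  have hdrpos : (0:ℝ) < dr + 1 := by linarith
  have hteq : t * (2 * (dr + 1)) = dr - 1 := by
    rw [ht, div_mul_cancel₀ _ (ne_of_gt (by linarith))]
  have ht2 : t ≤ 1/2 := by nlinarith
  have ht1 : 1/6 ≤ t := by nlinarith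
  have hut : u < t := by
    have h1 : (1:ℝ) < Real.exp u := by
      rw [← Real.exp_zero]; exact Real.exp_lt_exp.2 hu
    nlinarith
  have hU : Real.exp u ≤ 1 + t + t^2/2 + 2*t^3/9 := by
    have := expu_le u hu (by linarith)
    nlinarith [Real.exp_pos u]
  have hU2 : Real.exp u ≤ 0.9 * (1 + 2*t) := by
    nlinarith [sq_nonneg t, mul_nonneg (mul_nonneg (le_of_lt (lt_of_lt_of_le (by norm_num : (0:ℝ)<1/6) ht1)) (sub_nonneg.2 ht2)) (sub_nonneg.2 ht1)]
  have hE := expw_ge w hw hweq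
  calc (dr + 1) * Real.exp u ≤ (dr + 1) * (0.9 * (1 + 2*t)) := by
        nlinarith
    _ = 0.9 * ((dr + 1) + t * (2 * (dr+1))) := by ring
    _ = 1.8 * dr := by rw [hteq]; ring
    _ ≤ dr * Real.exp w := by nlinarith

/-- The maximum of `z ↦ (z d_r)^{d_r} ((d_r+1) e^{W(1.27)} - (d_r-1) z)` on
`[0, 1/(2 W((d_r-1)/(2(d_r+1))))]` is attained at the right endpoint. -/
theorem z_lemma (dr : ℝ) (hdr : 2 ≤ dr)
    (w : ℝ) (hw : 0 < w) (hweq : w * Real.exp w = 1.27)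
    (u : ℝ) (hu : 0 < u) (hueq : u * Real.exp u = (dr - 1) / (2 * (dr + 1))) :
    ∀ z ∈ Set.Icc (0 : ℝ) (1 / (2 * u)),
      (z * dr) ^ dr * ((dr + 1) * Real.exp w - (dr - 1) * z)
        ≤ (1 / (2 * u) * dr) ^ dr * ((dr + 1) * Real.exp w - (dr - 1) * (1 / (2 * u))) := by
  set M : ℝ := 1 / (2 * u) with hM
  set E : ℝ := Real.exp w with hE
  set f : ℝ → ℝ := fun z => (z * dr) ^ dr * ((dr + 1) * E - (dr - 1) * z) with hf
  have hMpos : 0 < M := by positivity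
  have hdrpos : 0 < dr := by linarith
  have hkey := key dr hdr w hw hweq u hu hueq
  have hMeq : (dr - 1) * M = (dr + 1) * Real.exp u := by
    rw [hM]
    field_simp
    rw [eq_comm]
    field_simp at hueq
    linarith [hueq]
  have hcrit : (dr - 1) * M ≤ dr * E := by rw [hMeq]; exact hkey
  have hfd : ∀ x ∈ Set.Ioo (0:ℝ) M, HasDerivAt f
      (dr * dr * (x * dr) ^ (dr - 1) * ((dr + 1) * E - (dr - 1) * x)
        + (x * dr) ^ dr * (0 - (dr - 1) * 1)) x := by
    intro x hx
    have hxdr : (0:ℝ) < x * dr := mul_pos hx.1 hdrpos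
    have hg : HasDerivAt (fun z => (z * dr) ^ dr) (1 * dr * dr * (x * dr) ^ (dr - 1)) x := by
      have := ((hasDerivAt_id x).mul_const dr).rpow_const (p := dr) (Or.inl (ne_of_gt hxdr))
      simpa using this
    have hh : HasDerivAt (fun z => (dr + 1) * E - (dr - 1) * z) (0 - (dr - 1) * 1) x := by
      have := (hasDerivAt_const x ((dr + 1) * E)).sub ((hasDerivAt_id x).const_mul (dr - 1))
      exact this
    have := hg.mul hh
    simp only [one_mul] at this; exact this
  have hmono : MonotoneOn f (Set.Icc 0 M) := by
    apply monotoneOn_of_deriv_nonneg (convex_Icc 0 M)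
    · apply Continuous.continuousOn
      apply Continuous.mul
      · exact (continuous_id.mul continuous_const).rpow_const
          (fun x => Or.inr (by linarith))
      · continuity
    · intro x hx
      rw [interior_Icc] at hx
      exact ((hfd x hx).differentiableAt).differentiableWithinAt
    · intro x hx
      rw [interior_Icc] at hx
      have hxdr : (0:ℝ) < x * dr := mul_pos hx.1 hdrpos
      rw [(hfd x hx).deriv]
      have hsplit : (x * dr) ^ dr = (x * dr) ^ (dr - 1) * (x * dr) := by
        rw [← Real.rpow_add_one (ne_of_gt hxdr) (dr - 1)]
        norm_num
      rw [hsplit]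
      have hfac : dr * dr * (x * dr) ^ (dr - 1) * ((dr + 1) * E - (dr - 1) * x)
            + (x * dr) ^ (dr - 1) * (x * dr) * (0 - (dr - 1) * 1)
          = (x * dr) ^ (dr - 1) * (dr * (dr + 1)) * (dr * E - (dr - 1) * x) := by ring
      rw [hfac]
      have h1 : (0:ℝ) ≤ (x * dr) ^ (dr - 1) := Real.rpow_nonneg (le_of_lt hxdr) _
      have h2 : (dr - 1) * x ≤ (dr - 1) * M := by nlinarith [hx.2]
      have h3 : (0:ℝ) ≤ dr * E - (dr - 1) * x := by linarith
      have h4 : (0:ℝ) ≤ dr * (dr + 1) := by nlinarith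
      exact mul_nonneg (mul_nonneg h1 h4) h3
  intro z hz
  exact hmono hz (Set.mem_Icc.2 ⟨le_of_lt hMpos, le_refl M⟩) hz.2
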